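/- Let (X, d) be a complete separable metric space and μᵢ a sequence of probability measures on X converging weakly to μ_∞ and satisfying Var(μᵢ) ≤ C < ∞ for all i. Then μᵢ → μ_∞ in the 1-Wasserstein distance. -/

import Mathlib

open scoped ENNReal

open MeasureTheory Filter
open scoped NNReal

/-- The variance between two measures on a metric space:
`Var(μ, ν) = ∫∫ d²(x, y) dμ(x) dν(y)` (valued in `ℝ≥0∞`, may be `∞`). -/
noncomputable def Var {X : Type*} [MetricSpace X] [MeasurableSpace X]
    (μ ν : Measure X) : ℝ≥0∞ :=
  ∫⁻ x, ∫⁻ y, edist x y ^ 2 ∂ν ∂μ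

/-- The 1-Wasserstein distance: the infimum of `∫ d(x, y) dq(x, y)` over all
couplings `q` of `μ` and `ν` (valued in `ℝ≥0∞`, may be `∞`). -/
noncomputable def W1 {X : Type*} [MetricSpace X] [MeasurableSpace X]
    (μ ν : Measure X) : ℝ≥0∞ :=
  ⨅ (q : Measure (X × X)) (_ : q.map Prod.fst = μ ∧ q.map Prod.snd = ν),
    ∫⁻ p, edist p.1 p.2 ∂q

namespace W1Aux

open Set

variable {X : Type*} [MetricSpace X] [MeasurableSpace X] [BorelSpace X]

lemma w1_le_coupling (μ ν : Measure X) (q : Measure (X × X))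
    (h1 : q.map Prod.fst = μ) (h2 : q.map Prod.snd = ν) :
    W1 μ ν ≤ ∫⁻ p, edist p.1 p.2 ∂q :=
  iInf_le_of_le q (iInf_le _ ⟨h1, h2⟩)

lemma map_finset_sum {α β : Type*} [MeasurableSpace α] [MeasurableSpace β]
    {f : α → β} (hf : Measurable f) (s : Finset ℕ) (m : ℕ → Measure α) :
    (∑ k ∈ s, m k).map f = ∑ k ∈ s, (m k).map f := by
  classical
  induction s using Finset.induction with
  | empty => simp
  | insert _ _ h ih =>
      rw [Finset.sum_insert h, Finset.sum_insert h, Measure.map_add _ _ hf, ih]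

/-- pointwise bound `d ≤ R + d²/R`. -/
lemma edist_le_add_sq_div (d R : ℝ≥0∞) : d ≤ R + d ^ 2 / R := by
  rcases le_total d R with h | h
  · exact le_trans h le_self_add
  · rcases eq_or_ne d 0 with rfl | hd0
    · simp
    rcases eq_or_ne R ∞ with rfl | hRt
    · exact le_add_right le_top
    refine le_trans ?_ le_add_self
    rcases eq_or_ne R 0 with rfl | hR0
    · rw [ENNReal.div_zero (by simpa using hd0)]; exact le_top
    rw [ENNReal.le_div_iff_mul_le (Or.inl hR0) (Or.inl hRt), pow_two]
    exact mul_le_mul_right h d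

lemma coeff_one_sub_mul {m a : ℝ≥0∞} (hm : m ≤ a) (ha : a ≠ ∞) :
    (1 - m / a) * a = a - m := by
  rcases eq_or_ne a 0 with rfl | ha0
  · simp [le_zero_iff.mp hm]
  · rw [ENNReal.sub_mul (fun _ _ => ha), one_mul, ENNReal.div_mul_cancel ha0 ha]

lemma coeff_div_mul {m a b : ℝ≥0∞} (hma : m ≤ a) (hmb : m ≤ b)
    (ha : a ≠ ∞) (hb : b ≠ ∞) : (m / (a * b)) * b = m / a := by
  rcases eq_or_ne b 0 with rfl | hb0
  · simp [le_zero_iff.mp hmb]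
  rcases eq_or_ne a 0 with rfl | ha0
  · simp [le_zero_iff.mp hma]
  rw [div_eq_mul_inv, ENNReal.mul_inv (Or.inl ha0) (Or.inl ha), mul_assoc, mul_assoc,
    ENNReal.inv_mul_cancel hb0 hb, mul_one, ← div_eq_mul_inv]

lemma div_mul_le_self' (a b : ℝ≥0∞) : a / b * b ≤ a := by
  rcases eq_or_ne b 0 with rfl | hb0
  · simp
  rcases eq_or_ne b ∞ with rfl | hbt
  · simp [ENNReal.div_top]
  · rw [ENNReal.div_mul_cancel hb0 hbt]

lemma inv_mul_self_le_one (r : ℝ≥0∞) (hr : r ≠ ∞) : r⁻¹ * r ≤ 1 := by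
  rcases eq_or_ne r 0 with rfl | hr0
  · simp
  · rw [ENNReal.inv_mul_cancel hr0 hr]

lemma restrict_biUnion_sum (μ : Measure X) (n : ℕ) (A : ℕ → Set X)
    (hAm : ∀ k, MeasurableSet (A k)) (hdisj : Pairwise (Function.onFun Disjoint A)) :
    μ.restrict (⋃ k ∈ Finset.range n, A k) = ∑ k ∈ Finset.range n, μ.restrict (A k) := by
  induction n with
  | zero => simp
  | succ n ih =>
      rw [Finset.sum_range_succ, ← ih, Finset.range_add_one]
      rw [Finset.set_biUnion_insert]
      rw [Measure.restrict_union' _ (hAm n), add_comm]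
      exact Set.disjoint_right.mpr (fun x hx => by
        simp only [Set.mem_iUnion] at hx
        obtain ⟨k, hk, hxk⟩ := hx
        exact fun hxn => (hdisj (Finset.mem_range.mp hk).ne).le_bot ⟨hxk, hxn⟩)

lemma key (μ ν : Measure X) [IsProbabilityMeasure μ] [IsProbabilityMeasure ν]
    (x0 : X) (n : ℕ) (A : ℕ → Set X) (hAm : ∀ k, MeasurableSet (A k))
    (hdisj : Pairwise (Function.onFun Disjoint A))
    (ε R Mμ Mν : ℝ≥0∞)
    (hdiam : ∀ k < n, ∀ x ∈ A k, ∀ y ∈ A k, edist x y ≤ ε)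
    (hMμ : ∫⁻ x, edist x x0 ^ 2 ∂μ ≤ Mμ)
    (hMν : ∫⁻ x, edist x x0 ^ 2 ∂ν ≤ Mν) :
    W1 μ ν ≤ ε + 2 * R * (1 - ∑ k ∈ Finset.range n, min (μ (A k)) (ν (A k)))
      + (Mμ + Mν) / R := by
  classical
  set m : ℕ → ℝ≥0∞ := fun k => min (μ (A k)) (ν (A k)) with hm_def
  set U : Set X := ⋃ k ∈ Finset.range n, A k with hU_def
  have hUm : MeasurableSet U := (Finset.range n).measurableSet_biUnion (fun k _ => (hAm k))
  have hmμ : ∀ k, m k ≤ μ (A k) := fun k => min_le_left _ _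
  have hmν : ∀ k, m k ≤ ν (A k) := fun k => min_le_right _ _
  have hdisj' : Set.PairwiseDisjoint (↑(Finset.range n)) A := fun a _ b _ hab => hdisj hab
  have hsumμ : ∑ k ∈ Finset.range n, μ (A k) = μ U :=
    (measure_biUnion_finset hdisj' (fun k _ => hAm k)).symm
  have hsumν : ∑ k ∈ Finset.range n, ν (A k) = ν U :=
    (measure_biUnion_finset hdisj' (fun k _ => hAm k)).symm
  set S : ℝ≥0∞ := ∑ k ∈ Finset.range n, m k with hS_def
  have hS_le_μU : S ≤ μ U := hsumμ ▸ Finset.sum_le_sum (fun k _ => hmμ k)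
  have hS_le_νU : S ≤ ν U := hsumν ▸ Finset.sum_le_sum (fun k _ => hmν k)
  have hS_le_one : S ≤ 1 := le_trans hS_le_μU prob_le_one
  set r : ℝ≥0∞ := 1 - S with hr_def
  have hr_le_one : r ≤ 1 := tsub_le_self
  have hr_ne_top : r ≠ ∞ := (lt_of_le_of_lt hr_le_one ENNReal.one_lt_top).ne
  -- the leftover measures
  set μt : Measure X :=
    (∑ k ∈ Finset.range n, (1 - m k / μ (A k)) • μ.restrict (A k)) + μ.restrict Uᶜ with hμt_def
  set νt : Measure X :=
    (∑ k ∈ Finset.range n, (1 - m k / ν (A k)) • ν.restrict (A k)) + ν.restrict Uᶜ with hνt_def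
  have huniv : ∀ (ρ : Measure X), IsProbabilityMeasure ρ → (∀ k, m k ≤ ρ (A k)) →
      (∑ k ∈ Finset.range n, ρ (A k) = ρ U) →
      ((∑ k ∈ Finset.range n, (1 - m k / ρ (A k)) • ρ.restrict (A k)) + ρ.restrict Uᶜ)
        Set.univ = r := by
    intro ρ hρ hmρ hsum
    have : ∀ k ∈ Finset.range n, ((1 - m k / ρ (A k)) • ρ.restrict (A k)) Set.univ
        = ρ (A k) - m k := by
      intro k _
      rw [Measure.smul_apply, smul_eq_mul, Measure.restrict_apply_univ,
        coeff_one_sub_mul (hmρ k) (measure_ne_top ρ _)]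
    rw [Measure.add_apply, Measure.finset_sum_apply, Finset.sum_congr rfl this,
      Measure.restrict_apply_univ, measure_compl hUm (measure_ne_top ρ _), measure_univ]
    have hsub : ∑ k ∈ Finset.range n, (ρ (A k) - m k) = ρ U - S := by
      have h1 : ∑ k ∈ Finset.range n, (ρ (A k) - m k) + S = ρ U := by
        rw [hS_def, ← Finset.sum_add_distrib, ← hsum]
        exact Finset.sum_congr rfl (fun k _ => tsub_add_cancel_of_le (hmρ k))
      have hS_ne : S ≠ ∞ := (lt_of_le_of_lt hS_le_one ENNReal.one_lt_top).ne
      exact ENNReal.eq_sub_of_add_eq hS_ne h1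
    rw [hsub, hr_def, add_comm]
    exact tsub_add_tsub_cancel (prob_le_one) (hsum ▸ Finset.sum_le_sum (fun k _ => hmρ k))
  have hμt_univ : μt Set.univ = r := huniv μ ‹_› hmμ hsumμ
  have hνt_univ : νt Set.univ = r := huniv ν ‹_› hmν hsumν
  haveI hμt_fin : IsFiniteMeasure μt :=
    ⟨by rw [hμt_univ]; exact lt_of_le_of_lt hr_le_one ENNReal.one_lt_top⟩
  haveI hνt_fin : IsFiniteMeasure νt :=
    ⟨by rw [hνt_univ]; exact lt_of_le_of_lt hr_le_one ENNReal.one_lt_top⟩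
  -- reconstruction of the marginals
  have hrecon : ∀ (ρ : Measure X), IsProbabilityMeasure ρ → (∀ k, m k ≤ ρ (A k)) →
      (∑ k ∈ Finset.range n, (m k / ρ (A k)) • ρ.restrict (A k)) +
      ((∑ k ∈ Finset.range n, (1 - m k / ρ (A k)) • ρ.restrict (A k)) + ρ.restrict Uᶜ) = ρ := by
    intro ρ hρ hmρ
    rw [← add_assoc, ← Finset.sum_add_distrib]
    have : ∀ k ∈ Finset.range n,
        (m k / ρ (A k)) • ρ.restrict (A k) + (1 - m k / ρ (A k)) • ρ.restrict (A k)
        = ρ.restrict (A k) := by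
      intro k _
      rw [← add_smul, add_tsub_cancel_of_le, one_smul]
      exact (ENNReal.div_le_iff_le_mul (Or.inr ENNReal.one_ne_top)
        (Or.inr one_ne_zero)).mpr (by simpa using hmρ k)
    rw [Finset.sum_congr rfl this, ← restrict_biUnion_sum ρ n A hAm hdisj, ← hU_def,
      Measure.restrict_add_restrict_compl hUm]
  -- the coupling
  set c : ℕ → ℝ≥0∞ := fun k => m k / (μ (A k) * ν (A k)) with hc_def
  set q : Measure (X × X) :=
    (∑ k ∈ Finset.range n, c k • ((μ.restrict (A k)).prod (ν.restrict (A k)))) +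
      r⁻¹ • (μt.prod νt) with hq_def
  have hscal : ∀ (ρ : Measure X), ρ Set.univ = r → (r⁻¹ * r) • ρ = ρ := by
    intro ρ hρ
    rcases eq_or_ne r 0 with h0 | h0
    · have hz : ρ = 0 := Measure.measure_univ_eq_zero.mp (by rw [hρ, h0])
      simp [hz]
    · rw [ENNReal.inv_mul_cancel h0 hr_ne_top, one_smul]
  have hfst : q.map Prod.fst = μ := by
    have hterm : ∀ k ∈ Finset.range n,
        ((c k • ((μ.restrict (A k)).prod (ν.restrict (A k)))).map Prod.fst)
          = (m k / μ (A k)) • μ.restrict (A k) := by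
      intro k _
      rw [Measure.map_smul, Measure.map_fst_prod, Measure.restrict_apply_univ, smul_smul]
      congr 1
      exact coeff_div_mul (hmμ k) (hmν k) (measure_ne_top μ _) (measure_ne_top ν _)
    rw [hq_def, Measure.map_add _ _ measurable_fst, map_finset_sum measurable_fst,
      Finset.sum_congr rfl hterm, Measure.map_smul, Measure.map_fst_prod,
      hνt_univ, smul_smul, hscal μt hμt_univ, hμt_def]
    exact hrecon μ ‹_› hmμ
  have hsnd : q.map Prod.snd = ν := by
    have hterm : ∀ k ∈ Finset.range n,
        ((c k • ((μ.restrict (A k)).prod (ν.restrict (A k)))).map Prod.snd)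
          = (m k / ν (A k)) • ν.restrict (A k) := by
      intro k _
      rw [Measure.map_smul, Measure.map_snd_prod, Measure.restrict_apply_univ, smul_smul]
      congr 1
      rw [hc_def]
      simp only [mul_comm (μ (A k)) (ν (A k))]
      exact coeff_div_mul (hmν k) (hmμ k) (measure_ne_top ν _) (measure_ne_top μ _)
    rw [hq_def, Measure.map_add _ _ measurable_snd, map_finset_sum measurable_snd,
      Finset.sum_congr rfl hterm, Measure.map_smul, Measure.map_snd_prod,
      hμt_univ, smul_smul, hscal νt hνt_univ, hνt_def]
    exact hrecon ν ‹_› hmν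
  refine le_trans (w1_le_coupling μ ν q hfst hsnd) ?_
  -- the leftover measures are dominated
  have hμt_le : μt ≤ μ := by
    have h := hrecon μ ‹_› hmμ
    rw [← hμt_def] at h
    calc μt ≤ _ + μt := Measure.le_add_left (le_refl μt)
      _ = μ := h
  have hνt_le : νt ≤ ν := by
    have h := hrecon ν ‹_› hmν
    rw [← hνt_def] at h
    calc νt ≤ _ + νt := Measure.le_add_left (le_refl νt)
      _ = ν := h
  have hme : Measurable fun x : X => edist x x0 :=
    (continuous_id.edist continuous_const).measurable
  have hside : ∀ (ρt ρ : Measure X) (Mρ : ℝ≥0∞), ρt ≤ ρ → ρt Set.univ = r →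
      (∫⁻ x, edist x x0 ^ 2 ∂ρ ≤ Mρ) → ∫⁻ x, edist x x0 ∂ρt ≤ R * r + Mρ / R := by
    intro ρt ρ Mρ hle hu hM
    calc ∫⁻ x, edist x x0 ∂ρt ≤ ∫⁻ x, (R + edist x x0 ^ 2 / R) ∂ρt :=
        lintegral_mono (fun x => edist_le_add_sq_div _ _)
      _ = R * r + (∫⁻ x, edist x x0 ^ 2 ∂ρt) / R := by
          rw [lintegral_add_left measurable_const, lintegral_const, hu]
          congr 1
          simp_rw [div_eq_mul_inv]
          rw [lintegral_mul_const _ (hme.pow_const 2)]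
      _ ≤ R * r + Mρ / R := by
          gcongr
          exact le_trans (lintegral_mono' hle le_rfl) hM
  rw [hq_def, lintegral_add_measure, lintegral_finset_sum_measure]
  have hmain : ∑ k ∈ Finset.range n,
      ∫⁻ p, edist p.1 p.2 ∂(c k • ((μ.restrict (A k)).prod (ν.restrict (A k)))) ≤ ε := by
    have hk : ∀ k ∈ Finset.range n,
        ∫⁻ p, edist p.1 p.2 ∂(c k • ((μ.restrict (A k)).prod (ν.restrict (A k))))
          ≤ ε * m k := by
      intro k hkn
      rw [lintegral_smul_measure, Measure.prod_restrict]
      have hb : ∫⁻ p in (A k ×ˢ A k), edist p.1 p.2 ∂(μ.prod ν)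
          ≤ ε * (μ (A k) * ν (A k)) := by
        calc ∫⁻ p in A k ×ˢ A k, edist p.1 p.2 ∂(μ.prod ν)
            ≤ ∫⁻ _ in A k ×ˢ A k, ε ∂(μ.prod ν) :=
              setLIntegral_mono' ((hAm k).prod (hAm k))
                (fun p hp => hdiam k (Finset.mem_range.mp hkn) p.1 hp.1 p.2 hp.2)
          _ = ε * (μ (A k) * ν (A k)) := by
              rw [setLIntegral_const, Measure.prod_prod, mul_comm]
      calc c k * ∫⁻ p in A k ×ˢ A k, edist p.1 p.2 ∂(μ.prod ν)
          ≤ c k * (ε * (μ (A k) * ν (A k))) := mul_le_mul_right hb _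
        _ = ε * (c k * (μ (A k) * ν (A k))) := by ring
        _ ≤ ε * m k := mul_le_mul_right (by rw [hc_def]; exact div_mul_le_self' _ _) _
    calc ∑ k ∈ Finset.range n,
        ∫⁻ p, edist p.1 p.2 ∂(c k • ((μ.restrict (A k)).prod (ν.restrict (A k))))
        ≤ ∑ k ∈ Finset.range n, ε * m k := Finset.sum_le_sum hk
      _ = ε * S := by rw [hS_def, Finset.mul_sum]
      _ ≤ ε * 1 := mul_le_mul_right hS_le_one _
      _ = ε := mul_one _
  have hprod : ∫⁻ p, edist p.1 p.2 ∂(μt.prod νt)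
      ≤ r * ((R * r + Mμ / R) + (R * r + Mν / R)) := by
    have h1 : ∫⁻ p : X × X, edist p.1 x0 ∂(μt.prod νt) = r * ∫⁻ x, edist x x0 ∂μt := by
      rw [← lintegral_map hme measurable_fst, Measure.map_fst_prod, hνt_univ,
        lintegral_smul_measure, smul_eq_mul]
    have h2 : ∫⁻ p : X × X, edist x0 p.2 ∂(μt.prod νt) = r * ∫⁻ x, edist x x0 ∂νt := by
      have hme' : Measurable fun x : X => edist x0 x :=
        (continuous_const.edist continuous_id).measurable
      rw [← lintegral_map hme' measurable_snd, Measure.map_snd_prod, hμt_univ,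
        lintegral_smul_measure, smul_eq_mul]
      simp_rw [edist_comm x0]
    calc ∫⁻ p, edist p.1 p.2 ∂(μt.prod νt)
        ≤ ∫⁻ p : X × X, (edist p.1 x0 + edist x0 p.2) ∂(μt.prod νt) :=
          lintegral_mono (fun p => edist_triangle _ _ _)
      _ = ∫⁻ p : X × X, edist p.1 x0 ∂(μt.prod νt)
          + ∫⁻ p : X × X, edist x0 p.2 ∂(μt.prod νt) :=
          lintegral_add_left (hme.comp measurable_fst) _
      _ = r * ∫⁻ x, edist x x0 ∂μt + r * ∫⁻ x, edist x x0 ∂νt := by rw [h1, h2]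
      _ ≤ r * (R * r + Mμ / R) + r * (R * r + Mν / R) :=
          add_le_add (mul_le_mul_right (hside μt μ Mμ hμt_le hμt_univ hMμ) _)
            (mul_le_mul_right (hside νt ν Mν hνt_le hνt_univ hMν) _)
      _ = r * ((R * r + Mμ / R) + (R * r + Mν / R)) := (mul_add _ _ _).symm
  have hrem : ∫⁻ p, edist p.1 p.2 ∂(r⁻¹ • (μt.prod νt)) ≤ 2 * R * r + (Mμ + Mν) / R := by
    rw [lintegral_smul_measure]
    calc r⁻¹ * ∫⁻ p, edist p.1 p.2 ∂(μt.prod νt)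
        ≤ r⁻¹ * (r * ((R * r + Mμ / R) + (R * r + Mν / R))) := mul_le_mul_right hprod _
      _ = (r⁻¹ * r) * ((R * r + Mμ / R) + (R * r + Mν / R)) := (mul_assoc _ _ _).symm
      _ ≤ 1 * ((R * r + Mμ / R) + (R * r + Mν / R)) :=
          mul_le_mul_left (inv_mul_self_le_one r hr_ne_top) _
      _ = (R * r + Mμ / R) + (R * r + Mν / R) := one_mul _
      _ = 2 * R * r + (Mμ + Mν) / R := by
          rw [div_eq_mul_inv, div_eq_mul_inv, div_eq_mul_inv]; ring
  calc (∑ k ∈ Finset.range n,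
        ∫⁻ p, edist p.1 p.2 ∂(c k • ((μ.restrict (A k)).prod (ν.restrict (A k)))))
      + ∫⁻ p, edist p.1 p.2 ∂(r⁻¹ • (μt.prod νt))
      ≤ ε + (2 * R * r + (Mμ + Mν) / R) := add_le_add hmain hrem
    _ = ε + 2 * R * r + (Mμ + Mν) / R := (add_assoc _ _ _).symm

lemma sq_add_le (a b : ℝ≥0∞) : (a + b) ^ 2 ≤ 4 * a ^ 2 + 4 * b ^ 2 := by
  have h1 : a + b ≤ 2 * (a ⊔ b) := by
    rw [two_mul]
    exact add_le_add le_sup_left le_sup_right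
  calc (a + b) ^ 2 ≤ (2 * (a ⊔ b)) ^ 2 := pow_le_pow_left' h1 2
    _ = 4 * (a ⊔ b) ^ 2 := by rw [mul_pow]; norm_num
    _ ≤ 4 * (a ^ 2 + b ^ 2) := by
        gcongr
        rcases le_total a b with h | h
        · rw [sup_eq_right.mpr h]; exact le_add_self
        · rw [sup_eq_left.mpr h]; exact le_add_right le_rfl
    _ = 4 * a ^ 2 + 4 * b ^ 2 := by ring

lemma second_moment_bound (ρ : Measure X) [IsProbabilityMeasure ρ] (x0 : X) (N : ℝ≥0∞)
    (B : Set X) (hB : ∀ y ∈ B, edist y x0 ≤ N) (hBm : MeasurableSet B)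
    (hBhalf : 1 / 2 ≤ ρ B) (C : ℝ≥0∞)
    (hvar : ∫⁻ x, ∫⁻ y, edist x y ^ 2 ∂ρ ∂ρ ≤ C) :
    ∫⁻ x, edist x x0 ^ 2 ∂ρ ≤ 8 * C + 8 * N ^ 2 := by
  have hpt : ∀ x : X, edist x x0 ^ 2 * ρ B
      ≤ 4 * N ^ 2 + 4 * ∫⁻ y, edist x y ^ 2 ∂ρ := by
    intro x
    have hyB : ∀ y ∈ B, edist x x0 ^ 2 ≤ 4 * edist x y ^ 2 + 4 * N ^ 2 := by
      intro y hy
      calc edist x x0 ^ 2 ≤ (edist x y + edist y x0) ^ 2 :=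
            pow_le_pow_left' (edist_triangle _ _ _) 2
        _ ≤ (edist x y + N) ^ 2 := by gcongr; exact hB y hy
        _ ≤ 4 * edist x y ^ 2 + 4 * N ^ 2 := sq_add_le _ _
    calc edist x x0 ^ 2 * ρ B = ∫⁻ _ in B, edist x x0 ^ 2 ∂ρ := (setLIntegral_const _ _).symm
      _ ≤ ∫⁻ y in B, (4 * edist x y ^ 2 + 4 * N ^ 2) ∂ρ := setLIntegral_mono' hBm hyB
      _ ≤ ∫⁻ y, (4 * edist x y ^ 2 + 4 * N ^ 2) ∂ρ :=
          lintegral_mono' Measure.restrict_le_self le_rfl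
      _ = ∫⁻ y, 4 * edist x y ^ 2 ∂ρ + 4 * N ^ 2 := by
          rw [lintegral_add_right _ measurable_const, lintegral_const, measure_univ, mul_one]
      _ = 4 * ∫⁻ y, edist x y ^ 2 ∂ρ + 4 * N ^ 2 := by
          rw [lintegral_const_mul' _ _ (by norm_num)]
      _ = 4 * N ^ 2 + 4 * ∫⁻ y, edist x y ^ 2 ∂ρ := add_comm _ _
  have hint : (∫⁻ x, edist x x0 ^ 2 ∂ρ) * ρ B ≤ 4 * N ^ 2 + 4 * C := by
    calc (∫⁻ x, edist x x0 ^ 2 ∂ρ) * ρ B = ∫⁻ x, edist x x0 ^ 2 * ρ B ∂ρ :=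
          (lintegral_mul_const' _ _ (measure_ne_top ρ _)).symm
      _ ≤ ∫⁻ x, (4 * N ^ 2 + 4 * ∫⁻ y, edist x y ^ 2 ∂ρ) ∂ρ := lintegral_mono hpt
      _ = 4 * N ^ 2 + ∫⁻ x, 4 * ∫⁻ y, edist x y ^ 2 ∂ρ ∂ρ := by
          rw [lintegral_add_left measurable_const, lintegral_const, measure_univ, mul_one]
      _ = 4 * N ^ 2 + 4 * ∫⁻ x, ∫⁻ y, edist x y ^ 2 ∂ρ ∂ρ := by
          rw [lintegral_const_mul' _ _ (by norm_num)]
      _ ≤ 4 * N ^ 2 + 4 * C := by gcongr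
  calc ∫⁻ x, edist x x0 ^ 2 ∂ρ
      = (∫⁻ x, edist x x0 ^ 2 ∂ρ) * (1 / 2) * 2 := by
        rw [mul_assoc, ENNReal.div_mul_cancel (by norm_num) (by norm_num), mul_one]
    _ ≤ (∫⁻ x, edist x x0 ^ 2 ∂ρ) * ρ B * 2 := by gcongr
    _ ≤ (4 * N ^ 2 + 4 * C) * 2 := by gcongr
    _ = 8 * C + 8 * N ^ 2 := by ring

lemma iSup_min_nat (a : ℝ≥0∞) (ha : a ≠ ∞) : ⨆ L : ℕ, min a (L : ℝ≥0∞) = a := by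
  refine le_antisymm (iSup_le fun L => min_le_left _ _) ?_
  obtain ⟨L, hL⟩ := ENNReal.exists_nat_gt ha
  exact le_iSup_of_le L (le_min le_rfl hL.le)

lemma nnreal_dist_le (a b c : ℝ≥0) (ha : a ≤ c) (hb : b ≤ c) : dist a b ≤ (c : ℝ) := by
  rw [NNReal.dist_eq, abs_sub_le_iff]
  have h1 := NNReal.coe_le_coe.mpr ha
  have h2 := NNReal.coe_le_coe.mpr hb
  have h3 := a.coe_nonneg
  have h4 := b.coe_nonneg
  constructor <;> linarith

lemma second_moment_weak_limit [OpensMeasurableSpace X]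
    (P : ℕ → ProbabilityMeasure X) (P' : ProbabilityMeasure X)
    (hP : Tendsto P atTop (nhds P')) (x0 : X) (M : ℝ≥0∞)
    (hM : ∀ᶠ i in atTop, ∫⁻ x, edist x x0 ^ 2 ∂(P i : Measure X) ≤ M) :
    ∫⁻ x, edist x x0 ^ 2 ∂(P' : Measure X) ≤ M := by
  have hcont : ∀ L : ℕ, Continuous fun x : X => min (nndist x x0 ^ 2) (L : ℝ≥0) :=
    fun L => (((continuous_id.nndist continuous_const).pow 2).min continuous_const)
  set f : ℕ → BoundedContinuousFunction X ℝ≥0 := fun L =>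
    BoundedContinuousFunction.mkOfBound ⟨_, hcont L⟩ L
      (fun x y => nnreal_dist_le _ _ _ (min_le_right _ _) (min_le_right _ _)) with hf_def
  have hfval : ∀ L (x : X), ((f L x : ℝ≥0) : ℝ≥0∞) = min (edist x x0 ^ 2) (L : ℝ≥0∞) := by
    intro L x
    have : (f L x : ℝ≥0) = min (nndist x x0 ^ 2) (L : ℝ≥0) := rfl
    rw [this, ENNReal.coe_min, ENNReal.coe_pow, edist_nndist]
    norm_cast
  have hle : ∀ L, ∫⁻ x, ((f L x : ℝ≥0) : ℝ≥0∞) ∂(P' : Measure X) ≤ M := by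
    intro L
    have htend := ProbabilityMeasure.tendsto_iff_forall_lintegral_tendsto.mp hP (f L)
    refine le_of_tendsto htend (hM.mono fun i hi => le_trans (lintegral_mono fun x => ?_) hi)
    rw [hfval]
    exact min_le_left _ _
  have hmc : ∫⁻ x, edist x x0 ^ 2 ∂(P' : Measure X)
      = ⨆ L : ℕ, ∫⁻ x, ((f L x : ℝ≥0) : ℝ≥0∞) ∂(P' : Measure X) := by
    rw [← lintegral_iSup]
    · congr 1
      ext x
      simp_rw [hfval]
      exact (iSup_min_nat _ (ENNReal.pow_ne_top (edist_ne_top _ _))).symm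
    · exact fun L => (ENNReal.continuous_coe.comp (f L).continuous).measurable
    · intro L L' hLL' x
      simp_rw [hfval]
      exact min_le_min le_rfl (by exact_mod_cast Nat.cast_le.mpr hLL')
  rw [hmc]
  exact iSup_le hle

lemma frontier_diff_null (ρ : Measure X) {s t : Set X}
    (hs : ρ (frontier s) = 0) (ht : ρ (frontier t) = 0) : ρ (frontier (s \ t)) = 0 := by
  refine measure_mono_null ?_ (measure_union_null hs ht)
  rw [Set.diff_eq]
  refine (frontier_inter_subset s tᶜ).trans ?_
  refine (Set.union_subset_union Set.inter_subset_left Set.inter_subset_right).trans ?_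
  rw [frontier_compl]

lemma frontier_union_null (ρ : Measure X) {s t : Set X}
    (hs : ρ (frontier s) = 0) (ht : ρ (frontier t) = 0) : ρ (frontier (s ∪ t)) = 0 :=
  measure_mono_null ((frontier_union_subset s t).trans
    (Set.union_subset_union Set.inter_subset_left Set.inter_subset_right))
    (measure_union_null hs ht)

end W1Aux

/-- If probability measures `μᵢ` on a complete separable metric space converge weakly to `μ_∞`
(i.e. `∫ f dμᵢ → ∫ f dμ_∞` for all bounded continuous `f`) and have uniformly bounded
variances `Var(μᵢ) ≤ C < ∞`, then `μᵢ → μ_∞` in the 1-Wasserstein distance. -/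
theorem w1_tendsto_of_weak_tendsto_of_var_le {X : Type*} [MetricSpace X] [CompleteSpace X]
    [TopologicalSpace.SeparableSpace X] [MeasurableSpace X] [BorelSpace X]
    (μ : ℕ → Measure X) (μ' : Measure X) [∀ i, IsProbabilityMeasure (μ i)]
    [IsProbabilityMeasure μ']
    (C : ℝ≥0∞) (hC : C ≠ ∞) (hvar : ∀ i, Var (μ i) (μ i) ≤ C)
    (hweak : ∀ f : BoundedContinuousFunction X ℝ,
      Tendsto (fun i => ∫ x, f x ∂(μ i)) atTop (nhds (∫ x, f x ∂μ'))) :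
    Tendsto (fun i => W1 (μ i) μ') atTop (nhds 0) := by
  classical
  have hne : Nonempty X := by
    rcases isEmpty_or_nonempty X with h | h
    · exact absurd (measure_univ (μ := μ')) (by rw [Set.univ_eq_empty_iff.mpr h]; simp)
    · exact h
  set y : ℕ → X := TopologicalSpace.denseSeq X with hy_def
  have hy : DenseRange y := TopologicalSpace.denseRange_denseSeq X
  set x0 : X := y 0 with hx0_def
  set P : ℕ → ProbabilityMeasure X := fun i => ⟨μ i, inferInstance⟩ with hP_def
  set P' : ProbabilityMeasure X := ⟨μ', inferInstance⟩ with hP'_def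
  have hP : Tendsto P atTop (nhds P') :=
    MeasureTheory.ProbabilityMeasure.tendsto_iff_forall_integral_tendsto.mpr hweak
  have hport : ∀ E : Set X, μ' (frontier E) = 0 →
      Tendsto (fun i => μ i E) atTop (nhds (μ' E)) := fun E hE =>
    MeasureTheory.ProbabilityMeasure.tendsto_measure_of_null_frontier_of_tendsto' hP hE
  -- a ball with more than half the mass
  obtain ⟨N, hN⟩ : ∃ N : ℕ, 1/2 < μ' (Metric.ball x0 N) := by
    have hmono : Monotone (fun N : ℕ => Metric.ball x0 (N : ℝ)) := fun a b hab =>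
      Metric.ball_subset_ball (by exact_mod_cast hab)
    have ht := tendsto_measure_iUnion_atTop (μ := μ') hmono
    rw [Metric.iUnion_ball_nat, measure_univ] at ht
    exact (ht.eventually_const_lt (ENNReal.half_lt_self one_ne_zero ENNReal.one_ne_top)).exists
  set Nr : ℝ≥0∞ := ENNReal.ofReal N with hNr
  have hev_half : ∀ᶠ i in atTop, 1/2 ≤ μ i (Metric.ball x0 N) := by
    have hliminf := MeasureTheory.ProbabilityMeasure.le_liminf_measure_open_of_tendsto hP
      (Metric.isOpen_ball (x := x0) (ε := (N : ℝ)))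
    have h2 : (1/2 : ℝ≥0∞) < atTop.liminf fun i => μ i (Metric.ball x0 N) :=
      lt_of_lt_of_le hN hliminf
    exact (eventually_lt_of_lt_liminf h2).mono fun i hi => hi.le
  set M0 : ℝ≥0∞ := 8 * C + 8 * Nr ^ 2 with hM0_def
  have hNrtop : Nr ≠ ∞ := ENNReal.ofReal_ne_top
  have hM0top : M0 ≠ ∞ := by
    rw [hM0_def]
    exact ENNReal.add_ne_top.mpr ⟨ENNReal.mul_ne_top (by norm_num) hC,
      ENNReal.mul_ne_top (by norm_num) (ENNReal.pow_ne_top hNrtop)⟩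
  have hev_M : ∀ᶠ i in atTop, ∫⁻ x, edist x x0 ^ 2 ∂(μ i) ≤ M0 := by
    refine hev_half.mono (fun i hi => ?_)
    refine W1Aux.second_moment_bound (μ i) x0 Nr (Metric.ball x0 N) ?_
      Metric.isOpen_ball.measurableSet hi C (hvar i)
    intro z hz
    rw [edist_dist]
    exact ENNReal.ofReal_le_ofReal (Metric.mem_ball.mp hz).le
  have hM' : ∫⁻ x, edist x x0 ^ 2 ∂μ' ≤ M0 :=
    W1Aux.second_moment_weak_limit P P' hP x0 M0 hev_M
  set M1 : ℝ≥0∞ := M0 + 1 with hM1_def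
  have hM1top : M1 ≠ ∞ := ENNReal.add_ne_top.mpr ⟨hM0top, ENNReal.one_ne_top⟩
  have hM10 : M1 ≠ 0 := (lt_of_lt_of_le zero_lt_one le_add_self).ne'
  -- epsilon argument
  rw [ENNReal.tendsto_nhds_zero]
  intro ε hε
  set ε' : ℝ≥0∞ := min ε 1 with hε'_def
  have hε'0 : ε' ≠ 0 := (lt_min hε zero_lt_one).ne'
  have hε'top : ε' ≠ ∞ := ne_top_of_le_ne_top ENNReal.one_ne_top (min_le_right _ _)
  set ep : ℝ≥0∞ := ε' / 4 with hep_def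
  have hep0 : ep ≠ 0 := by
    rw [hep_def]
    simp [ENNReal.div_eq_zero_iff, hε'0]
  have heptop : ep ≠ ∞ := by
    rw [hep_def]
    exact (ENNReal.div_lt_top hε'top (by norm_num)).ne
  set R : ℝ≥0∞ := ep⁻¹ * (2 * M1) with hR_def
  have hR0 : R ≠ 0 :=
    mul_ne_zero (ENNReal.inv_ne_zero.mpr heptop) (mul_ne_zero (by norm_num) hM10)
  have hRtop : R ≠ ∞ :=
    ENNReal.mul_ne_top (ENNReal.inv_ne_top.mpr hep0) (ENNReal.mul_ne_top (by norm_num) hM1top)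
  have htail : (M1 + M1) / R ≤ ep := by
    rw [ENNReal.div_le_iff_le_mul (Or.inl hR0) (Or.inl hRtop), hR_def, ← mul_assoc,
      ENNReal.mul_inv_cancel hep0 heptop, one_mul, two_mul]
  set δ : ℝ≥0∞ := (4 * R)⁻¹ * ep with hδ_def
  have h4R0 : (4 : ℝ≥0∞) * R ≠ 0 := mul_ne_zero (by norm_num) hR0
  have h4Rtop : (4 : ℝ≥0∞) * R ≠ ∞ := ENNReal.mul_ne_top (by norm_num) hRtop
  have hδ0 : δ ≠ 0 := mul_ne_zero (ENNReal.inv_ne_zero.mpr h4Rtop) hep0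
  have hmid : 2 * R * (2 * δ) ≤ ep := by
    rw [hδ_def]
    calc 2 * R * (2 * ((4 * R)⁻¹ * ep)) = (4 * R) * (4 * R)⁻¹ * ep := by ring
      _ = 1 * ep := by rw [ENNReal.mul_inv_cancel h4R0 h4Rtop]
      _ ≤ ep := (one_mul ep).le
  -- good radius
  have hbad : ∀ j : ℕ, {t : ℝ | 0 < μ' (frontier (Metric.thickening t {y j}))}.Countable :=
    fun j => Measure.countable_meas_pos_of_disjoint_iUnion
      (fun t => isClosed_frontier.measurableSet) (Metric.frontier_thickening_disjoint {y j})
  have heppos : 0 < ep.toReal := ENNReal.toReal_pos hep0 heptop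
  obtain ⟨t0, ht0Ioo, ht0good⟩ : ∃ t0 ∈ Set.Ioo (ep.toReal/4) (ep.toReal/2),
      ∀ j, μ' (frontier (Metric.ball (y j) t0)) = 0 := by
    have hcnt : (⋃ j : ℕ,
        {t : ℝ | 0 < μ' (frontier (Metric.thickening t {y j}))}).Countable :=
      Set.countable_iUnion hbad
    set Bad : Set ℝ := ⋃ j : ℕ, {t : ℝ | 0 < μ' (frontier (Metric.thickening t {y j}))}
      with hBad_def
    have aux : volume (Set.Ioo (ep.toReal/4) (ep.toReal/2) \ Bad)
        = volume (Set.Ioo (ep.toReal/4) (ep.toReal/2)) :=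
      measure_diff_null (hcnt.measure_zero volume)
    have len_pos : (0 : ℝ≥0∞) < volume (Set.Ioo (ep.toReal/4) (ep.toReal/2) \ Bad) := by
      rw [aux, Real.volume_Ioo, ENNReal.ofReal_pos]
      linarith
    obtain ⟨t0, ht0⟩ := nonempty_of_measure_ne_zero len_pos.ne'
    refine ⟨t0, ht0.1, fun j => ?_⟩
    have hnot : ¬ 0 < μ' (frontier (Metric.thickening t0 {y j})) :=
      fun hc => ht0.2 (Set.mem_iUnion.mpr ⟨j, hc⟩)
    rw [← Metric.thickening_singleton]
    simpa using hnot
  have ht0pos : 0 < t0 := lt_trans (by linarith) ht0Ioo.1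
  set B : ℕ → Set X := fun j => Metric.ball (y j) t0 with hB_def
  set A : ℕ → Set X := disjointed B with hA_def
  have hAm : ∀ k, MeasurableSet (A k) :=
    MeasurableSet.disjointed (fun j => Metric.isOpen_ball.measurableSet)
  have hAdisj : Pairwise (Function.onFun Disjoint A) := disjoint_disjointed B
  have hAfront : ∀ k, μ' (frontier (A k)) = 0 := by
    have hps : ∀ k, μ' (frontier ((partialSups B) k)) = 0 := by
      intro k
      induction k with
      | zero => simpa [partialSups_zero] using ht0good 0
      | succ k ih =>
          rw [show k + 1 = Order.succ k from rfl, partialSups_succ]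
          exact W1Aux.frontier_union_null μ' ih (ht0good (k+1))
    intro k
    cases k with
    | zero => simpa [hA_def, disjointed_zero] using ht0good 0
    | succ k =>
        rw [hA_def, show k + 1 = Order.succ k from rfl, disjointed_succ _ (not_isMax k)]
        exact W1Aux.frontier_diff_null μ' (ht0good (k+1)) (hps k)
  have hAdiam : ∀ k, ∀ x ∈ A k, ∀ z ∈ A k, edist x z ≤ ep := by
    intro k x hx z hz
    have hx' : x ∈ B k := disjointed_le B k hx
    have hz' : z ∈ B k := disjointed_le B k hz
    have hdxz : dist x z < ep.toReal := by
      have h1 : dist x (y k) < t0 := Metric.mem_ball.mp hx'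
      have h2 : dist z (y k) < t0 := Metric.mem_ball.mp hz'
      have h3 : t0 < ep.toReal/2 := ht0Ioo.2
      calc dist x z ≤ dist x (y k) + dist (y k) z := dist_triangle _ _ _
        _ = dist x (y k) + dist z (y k) := by rw [dist_comm (y k) z]
        _ < ep.toReal := by linarith
    rw [edist_dist]
    calc ENNReal.ofReal (dist x z) ≤ ENNReal.ofReal ep.toReal :=
        ENNReal.ofReal_le_ofReal hdxz.le
      _ = ep := ENNReal.ofReal_toReal heptop
  have hAUnion : (⋃ k, A k) = Set.univ := by
    rw [hA_def, iUnion_disjointed]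
    ext z
    simp only [Set.mem_iUnion, Set.mem_univ, iff_true]
    obtain ⟨j, hj⟩ := hy.exists_dist_lt z ht0pos
    exact ⟨j, Metric.mem_ball.mpr hj⟩
  obtain ⟨n, hn⟩ : ∃ n : ℕ, 1 - δ < μ' (⋃ k ∈ Finset.range n, A k) := by
    have hmono : Monotone (fun n : ℕ => ⋃ k ∈ Finset.range n, A k) := by
      intro a b hab z hz
      simp only [Set.mem_iUnion, Finset.mem_range] at hz ⊢
      obtain ⟨k, hk, hzk⟩ := hz
      exact ⟨k, lt_of_lt_of_le hk hab, hzk⟩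
    have ht := tendsto_measure_iUnion_atTop (μ := μ') hmono
    have hU : (⋃ n : ℕ, ⋃ k ∈ Finset.range n, A k) = ⋃ k, A k := by
      ext z
      simp only [Set.mem_iUnion, Finset.mem_range]
      exact ⟨fun ⟨a, k, _, h⟩ => ⟨k, h⟩, fun ⟨k, h⟩ => ⟨k+1, k, Nat.lt_succ_self k, h⟩⟩
    rw [hU, hAUnion, measure_univ] at ht
    have h1δ : 1 - δ < 1 := ENNReal.sub_lt_self ENNReal.one_ne_top one_ne_zero hδ0
    exact (ht.eventually_const_lt h1δ).exists
  set sfun : ℕ → ℝ≥0∞ := fun i => ∑ k ∈ Finset.range n, min (μ i (A k)) (μ' (A k)) with hsfun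
  have hS : Tendsto sfun atTop (nhds (μ' (⋃ k ∈ Finset.range n, A k))) := by
    have hsum : μ' (⋃ k ∈ Finset.range n, A k)
        = ∑ k ∈ Finset.range n, min (μ' (A k)) (μ' (A k)) := by
      simp only [min_self]
      exact measure_biUnion_finset (fun a _ b _ hab => hAdisj hab) (fun k _ => hAm k)
    rw [hsum]
    exact tendsto_finset_sum _ (fun k _ => ((hport (A k) (hAfront k)).min tendsto_const_nhds))
  have hev_s : ∀ᶠ i in atTop, 1 - 2*δ < sfun i := by
    refine hS.eventually_const_lt (lt_of_le_of_lt ?_ hn)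
    exact tsub_le_tsub_left (le_mul_of_one_le_left zero_le one_le_two) 1
  filter_upwards [hev_M, hev_s] with i hiM his
  have happ := W1Aux.key (μ i) μ' x0 n A hAm hAdisj ep R M1 M1
      (fun k _ x hx z hz => hAdiam k x hx z hz)
      (le_trans hiM le_self_add) (le_trans hM' le_self_add)
  refine le_trans happ ?_
  have hrr : 1 - sfun i ≤ 2*δ := by
    rcases le_total 1 (2*δ) with h | h
    · exact tsub_le_self.trans h
    · rw [tsub_le_iff_right]
      calc (1 : ℝ≥0∞) = 2*δ + (1 - 2*δ) := (add_tsub_cancel_of_le h).symm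
        _ ≤ 2*δ + sfun i := add_le_add_right his.le _
  calc ep + 2*R*(1 - sfun i) + (M1+M1)/R ≤ ep + 2*R*(2*δ) + (M1+M1)/R := by gcongr
    _ ≤ ep + ep + ep := add_le_add (add_le_add le_rfl hmid) htail
    _ ≤ ε' := by
        have h3 : ep + ep + ep = ep * 3 := by ring
        have h4 : ep * 4 = ε' := ENNReal.div_mul_cancel (by norm_num) (by norm_num)
        rw [h3, ← h4]
        exact mul_le_mul_right (by norm_num) _
    _ ≤ ε := min_le_left _ _
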